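/- Egalitarian PoC lower bound for cycles with m ≥ n²: for a cycle on m = n² vertices labeled 1,...,n² in cyclic order, where each agent i ∈ {1,...,n} values the n vertices (j−1)n + i (j ∈ {1,...,n}) at 1/n each, the unconstrained optimal egalitarian welfare is 1, but in every connected allocation some agent receives at most one of her valued vertices, so the egalitarian welfare under connectivity is at most 1/n. Hence the egalitarian PoC of the cycle is at least n. -/

import Mathlib

def ConnB {V : Type*} (G : SimpleGraph V) (s : Finset V) : Prop :=
  s = ∅ ∨ (G.induce (s : Set V)).Connected

def IsAlloc {V : Type*} [Fintype V] [DecidableEq V] {n : ℕ} (A : Fin n → Finset V) : Prop :=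
  (∀ i j : Fin n, i ≠ j → Disjoint (A i) (A j)) ∧ Finset.univ.biUnion A = Finset.univ

/-- The cycle on `m` vertices `0 — 1 — ⋯ — (m-1) — 0`. -/
def cycleGraph (m : ℕ) : SimpleGraph (Fin m) where
  Adj x y := x ≠ y ∧ ((x.val + 1) % m = y.val ∨ (y.val + 1) % m = x.val)
  symm := ⟨by rintro x y ⟨h1, h2⟩; exact ⟨h1.symm, h2.symm⟩⟩
  loopless := ⟨by rintro x ⟨h1, _⟩; exact h1 rfl⟩

open Fin.NatCast Fin.CommRing

lemma fin_neg_val {m : ℕ} [NeZero m] (j : ℕ) (hj : 0 < j) (hjm : j < m) :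
    (-(j : Fin m) : Fin m).val = m - j := by
  have h1 : ((m - j : ℕ) : Fin m) + (j : Fin m) = 0 := by
    rw [← Nat.cast_add]
    have h2 : m - j + j = m := by omega
    rw [h2]
    simp
  have h2 : -(j : Fin m) = ((m - j : ℕ) : Fin m) := by
    rw [neg_eq_of_add_eq_zero_left h1]
  rw [h2, Fin.val_cast_of_lt (by omega)]

lemma sep {m : ℕ} [NeZero m] (j : ℕ) (x y : Fin m) (S : Finset (Fin m))
    (hS : ConnB (cycleGraph m) S) (hx : x ∈ S) (hy : y ∈ S)
    (hj1 : 1 ≤ j) (hjd : j < (y - x).val) (hdm : (y - x).val + j ≤ m) :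
    x + (j : Fin m) ∈ S ∨ x - (j : Fin m) ∈ S := by
  by_contra hcon
  push_neg at hcon
  obtain ⟨hz, hz'⟩ := hcon
  have hm : 0 < m := x.pos
  have hδm : (y - x).val < m := (y - x).isLt
  have hjm : j < m := by omega
  have h2j : 2 * j < m := by omega
  have hone : (1 : Fin m).val = 1 := by
    have h : (1 : Fin m).val = 1 % m := rfl
    rw [h, Nat.mod_eq_of_lt (by omega)]
  have hconn : ((cycleGraph m).induce (S : Set (Fin m))).Connected := by
    rcases hS with h | h
    · exact absurd (h ▸ hx) (by simp)
    · exact h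
  obtain ⟨w⟩ := hconn.preconnected ⟨x, hx⟩ ⟨y, hy⟩
  have step : ∀ a b : Fin m, a ∈ S → b ∈ S → (cycleGraph m).Adj a b →
      (((a - x).val < j ∨ m - j < (a - x).val) ↔
        ((b - x).val < j ∨ m - j < (b - x).val)) := by
    intro a b ha hb hab
    have hval : ∀ c : Fin m, c ∈ S → (c - x).val ≠ j ∧ (c - x).val ≠ m - j := by
      intro c hc
      constructor
      · intro h
        apply hz
        have h1 : c - x = (j : Fin m) := Fin.ext (by rw [h, Fin.val_cast_of_lt hjm])
        have h2 : x + (j : Fin m) = c := by rw [← h1]; ring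
        rwa [h2]
      · intro h
        apply hz'
        have h1 : c - x = -(j : Fin m) := Fin.ext (by rw [h, fin_neg_val j hj1 hjm])
        have h2 : x - (j : Fin m) = c := by rw [sub_eq_add_neg, ← h1]; ring
        rwa [h2]
    obtain ⟨ha1, ha2⟩ := hval a ha
    obtain ⟨hb1, hb2⟩ := hval b hb
    have hstep1 : ∀ c d : Fin m, (c.val + 1) % m = d.val →
        (d - x).val = ((c - x).val + 1) % m := by
      intro c d h
      have hd : d = c + 1 := by
        apply Fin.ext
        rw [← h, Fin.val_add, hone]
      have he : d - x = (c - x) + 1 := by rw [hd]; ring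
      rw [he, Fin.val_add, hone]
    rcases hab.2 with h | h
    · have hB := hstep1 a b h
      have hA := (a - x).isLt
      have hBlt := (b - x).isLt
      rcases Nat.lt_or_ge ((a - x).val + 1) m with h1 | h1
      · rw [Nat.mod_eq_of_lt h1] at hB
        omega
      · have hfm : (a - x).val + 1 = m := by omega
        rw [hfm, Nat.mod_self] at hB
        omega
    · have hB := hstep1 b a h
      have hA := (b - x).isLt
      have hBlt := (a - x).isLt
      rcases Nat.lt_or_ge ((b - x).val + 1) m with h1 | h1
      · rw [Nat.mod_eq_of_lt h1] at hB
        omega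
      · have hfm : (b - x).val + 1 = m := by omega
        rw [hfm, Nat.mod_self] at hB
        omega
  have inv : ∀ (a b : ↥(S : Set (Fin m))),
      ((cycleGraph m).induce (S : Set (Fin m))).Walk a b →
      ((((a : Fin m) - x).val < j ∨ m - j < ((a : Fin m) - x).val) ↔
        (((b : Fin m) - x).val < j ∨ m - j < ((b : Fin m) - x).val)) := by
    intro a b w
    induction w with
    | nil => exact Iff.rfl
    | cons h p ih =>
      refine (step _ _ ?_ ?_ h).trans ih
      · exact Subtype.mem _
      · exact Subtype.mem _
  have hinv := inv _ _ w
  simp only [sub_self, Fin.val_zero] at hinv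
  omega

lemma key (n : ℕ) (hn : 2 ≤ n) (S : Finset (Fin (n*n)))
    (hS : ConnB (cycleGraph (n*n)) S) (x y : Fin (n*n)) (hx : x ∈ S) (hy : y ∈ S)
    (hxy : x ≠ y) (hmod : x.val % n = y.val % n) : n + 1 ≤ S.card := by
  classical
  have hm : 0 < n * n := by positivity
  haveI : NeZero (n * n) := ⟨hm.ne'⟩
  have hnm : n ≤ n * n := Nat.le_mul_of_pos_left n (by omega)
  have h2n : 2 * n ≤ n * n := Nat.mul_le_mul_right n hn
  set δ := (y - x).val with hδdef
  have hδm : δ < n * n := (y - x).isLt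
  have hδ0 : δ ≠ 0 := by
    intro h
    apply hxy
    have h1 : y - x = 0 := Fin.ext (by rw [Fin.val_zero]; exact h)
    have := sub_eq_zero.mp h1
    exact this.symm
  have hval : y.val = (x.val + δ) % (n * n) := by
    have hyx : y = x + (y - x) := by ring
    conv_lhs => rw [hyx]
    rw [Fin.val_add]
  have hdvd : n ∣ δ := by
    have h1 : y.val % n = (x.val + δ) % n := by
      rw [hval, Nat.mod_mod_of_dvd _ ⟨n, rfl⟩]
    have h2 : Nat.ModEq n x.val (x.val + δ) := by
      unfold Nat.ModEq
      rw [← h1, hmod]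
    have h3 := (Nat.modEq_iff_dvd' (Nat.le_add_right _ _)).mp h2
    simpa using h3
  obtain ⟨k, hk⟩ := hdvd
  have hk1 : 1 ≤ k := by
    rcases Nat.eq_zero_or_pos k with h | h
    · exfalso; apply hδ0; rw [hk, h, mul_zero]
    · exact h
  have hkn : k < n := by
    by_contra h
    push_neg at h
    have : n * n ≤ n * k := Nat.mul_le_mul_left n h
    omega
  have hδn : n ≤ δ := by
    rw [hk]
    calc n = n * 1 := (mul_one n).symm
    _ ≤ n * k := Nat.mul_le_mul_left n hk1
  have hδtop : δ + n ≤ n * n := by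
    rw [hk]
    have h1 : k + 1 ≤ n := hkn
    calc n * k + n = n * (k + 1) := by ring
    _ ≤ n * n := Nat.mul_le_mul_left n h1
  have hsep : ∀ j : ℕ, 1 ≤ j → j ≤ n - 1 →
      x + (j : Fin (n*n)) ∈ S ∨ x - (j : Fin (n*n)) ∈ S := by
    intro j h1 h2
    exact sep j x y S hS hx hy h1 (by omega) (by omega)
  set g : ℕ → Fin (n*n) := fun j =>
    if x + (j : Fin (n*n)) ∈ S then x + (j : Fin (n*n)) else x - (j : Fin (n*n)) with hg
  have gval : ∀ j, 1 ≤ j → j ≤ n - 1 →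
      (g j - x).val = j ∨ (g j - x).val = n * n - j := by
    intro j h1 h2
    have hjm : j < n * n := by omega
    simp only [hg]
    split_ifs
    · left
      have he : x + (j : Fin (n*n)) - x = (j : Fin (n*n)) := by ring
      rw [he, Fin.val_cast_of_lt hjm]
    · right
      have he : x - (j : Fin (n*n)) - x = -(j : Fin (n*n)) := by ring
      rw [he, fin_neg_val j h1 hjm]
  set T : Finset (Fin (n*n)) := insert x (insert y ((Finset.Icc 1 (n-1)).image g)) with hT
  have hTS : T ⊆ S := by
    intro v hv
    simp only [hT, Finset.mem_insert, Finset.mem_image, Finset.mem_Icc] at hv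
    rcases hv with rfl | rfl | ⟨j, ⟨hj1, hj2⟩, rfl⟩
    · exact hx
    · exact hy
    · simp only [hg]
      split_ifs with h'
      · exact h'
      · exact (hsep j hj1 hj2).resolve_left h'
  have hTcard : T.card = n + 1 := by
    have hginj : Set.InjOn g ↑(Finset.Icc 1 (n-1)) := by
      intro j hj j' hj' heq
      rw [Finset.coe_Icc, Set.mem_Icc] at hj hj'
      have e1 := gval j hj.1 hj.2
      have e2 := gval j' hj'.1 hj'.2
      have e3 : (g j - x).val = (g j' - x).val := by rw [heq]
      omega
    have hynotin : y ∉ (Finset.Icc 1 (n-1)).image g := by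
      intro h
      obtain ⟨j, hj, hjy⟩ := Finset.mem_image.mp h
      rw [Finset.mem_Icc] at hj
      have e1 := gval j hj.1 hj.2
      rw [hjy] at e1
      omega
    have hxnotin : x ∉ insert y ((Finset.Icc 1 (n-1)).image g) := by
      intro h
      rcases Finset.mem_insert.mp h with h | h
      · exact hxy h
      · obtain ⟨j, hj, hjx⟩ := Finset.mem_image.mp h
        rw [Finset.mem_Icc] at hj
        have e1 := gval j hj.1 hj.2
        rw [hjx] at e1
        simp only [sub_self, Fin.val_zero] at e1
        omega
    rw [hT, Finset.card_insert_of_notMem hxnotin,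
      Finset.card_insert_of_notMem hynotin,
      Finset.card_image_of_injOn hginj, Nat.card_Icc]
    omega
  calc n + 1 = T.card := hTcard.symm
  _ ≤ S.card := Finset.card_le_card hTS

lemma card_res (n : ℕ) (hn : 0 < n) (i : ℕ) (hi : i < n) :
    (Finset.univ.filter (fun v : Fin (n*n) => v.val % n = i)).card = n := by
  have h := Finset.card_bij'
    (s := Finset.univ.filter (fun v : Fin (n*n) => v.val % n = i))
    (t := (Finset.univ : Finset (Fin n)))
    (i := fun v _ => (⟨v.val / n, by
      have := v.isLt
      exact Nat.div_lt_of_lt_mul (by omega)⟩ : Fin n))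
    (j := fun k _ => (⟨k.val * n + i, by
      have hk := k.isLt
      calc k.val * n + i < k.val * n + n := by omega
      _ = (k.val + 1) * n := by ring
      _ ≤ n * n := by
          have : k.val + 1 ≤ n := hk
          calc (k.val + 1) * n ≤ n * n := Nat.mul_le_mul_right n this⟩ : Fin (n*n)))
    (fun v hv => Finset.mem_univ _)
    (fun k hk => by
      simp only [Finset.mem_filter, Finset.mem_univ, true_and]
      rw [add_comm, Nat.add_mul_mod_self_right, Nat.mod_eq_of_lt hi])
    (fun v hv => by
      apply Fin.ext
      simp only
      have hmod : v.val % n = i := (Finset.mem_filter.mp hv).2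
      have hdm := Nat.div_add_mod v.val n
      rw [mul_comm]
      omega)
    (fun k hk => by
      apply Fin.ext
      simp only
      rw [add_comm, Nat.add_mul_div_right _ _ hn, Nat.div_eq_of_lt hi, zero_add])
  rw [h, Finset.card_univ, Fintype.card_fin]

/-- on a cycle with `m = n²` vertices (labeled 0-indexed), where agent `i` values
the `n` vertices congruent to `i` mod `n` at `1/n` each, some allocation gives every agent
utility `1`, while every connected allocation gives some agent at most `1/n`.  Hence the
egalitarian price of connectivity of the cycle is at least `n`. -/
theorem egal_poc_cycle_lower (n : ℕ) (hn : 2 ≤ n)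
    (u : Fin n → Fin (n * n) → ℝ)
    (hu : ∀ (i : Fin n) (v : Fin (n * n)),
      u i v = if v.val % n = i.val then ((n : ℝ))⁻¹ else 0) :
    (∃ A : Fin n → Finset (Fin (n * n)), IsAlloc A ∧ ∀ i, ∑ v ∈ A i, u i v = 1) ∧
    (∀ B : Fin n → Finset (Fin (n * n)), IsAlloc B →
      (∀ i, ConnB (cycleGraph (n * n)) (B i)) →
      ∃ i, ∑ v ∈ B i, u i v ≤ ((n : ℝ))⁻¹) := by
    classical
  have hn0 : (0:ℝ) < (n:ℝ) := by positivity
  constructor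
  · -- optimal allocation
    refine ⟨fun i => Finset.univ.filter (fun v => v.val % n = i.val), ⟨?_, ?_⟩, ?_⟩
    · intro i j hij
      rw [Finset.disjoint_left]
      intro v hv hv'
      simp only [Finset.mem_filter] at hv hv'
      exact hij (Fin.ext (hv.2 ▸ hv'.2))
    · ext v
      simp only [Finset.mem_biUnion, Finset.mem_filter, Finset.mem_univ, true_and,
        iff_true]
      exact ⟨⟨v.val % n, Nat.mod_lt _ (by omega)⟩, rfl⟩
    · intro i
      have hcard : (Finset.univ.filter (fun v : Fin (n*n) => v.val % n = i.val)).card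
          = n := card_res n (by omega) i.val i.isLt
      have hsum : ∑ v ∈ Finset.univ.filter (fun v : Fin (n*n) => v.val % n = i.val),
          u i v = ∑ _v ∈ Finset.univ.filter (fun v : Fin (n*n) => v.val % n = i.val),
          ((n:ℝ))⁻¹ := by
        apply Finset.sum_congr rfl
        intro v hv
        rw [hu, if_pos (Finset.mem_filter.mp hv).2]
      rw [hsum, Finset.sum_const, hcard, nsmul_eq_mul, mul_inv_cancel₀ hn0.ne']
  · -- connectivity bound
    intro B hB hconn
    by_contra h
    push_neg at h
    have hle : ∀ i, n + 1 ≤ (B i).card := by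
      intro i
      have hi := h i
      have hsum : ∑ v ∈ B i, u i v
          = ((B i).filter (fun v => v.val % n = i.val)).card * ((n:ℝ))⁻¹ := by
        have h1 : ∑ v ∈ B i, u i v
            = ∑ v ∈ B i, (if v.val % n = i.val then ((n : ℝ))⁻¹ else 0) :=
          Finset.sum_congr rfl (fun v _ => hu i v)
        rw [h1, ← Finset.sum_filter, Finset.sum_const, nsmul_eq_mul]
      rw [hsum] at hi
      have hinv : (0:ℝ) < ((n:ℝ))⁻¹ := by positivity
      have hc2 : 1 < ((B i).filter (fun v => v.val % n = i.val)).card := by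
        by_contra hle'
        push_neg at hle'
        have : (((B i).filter (fun v => v.val % n = i.val)).card : ℝ) ≤ 1 := by
          exact_mod_cast hle'
        nlinarith
      obtain ⟨a, ha, b, hb, hab⟩ := Finset.one_lt_card.mp hc2
      rw [Finset.mem_filter] at ha hb
      exact key n hn (B i) (hconn i) a b ha.1 hb.1 hab (by rw [ha.2, hb.2])
    have hsumcard : ∑ i, (B i).card = n * n := by
      rw [← Finset.card_biUnion (fun i _ j _ hij => hB.1 i j hij), hB.2,
        Finset.card_univ, Fintype.card_fin]
    have hge : n * (n + 1) ≤ ∑ i, (B i).card := by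
      calc n * (n + 1) = ∑ _i : Fin n, (n + 1) := by
            rw [Finset.sum_const, Finset.card_univ, Fintype.card_fin, smul_eq_mul]
      _ ≤ _ := Finset.sum_le_sum (fun i _ => hle i)
    have : n * (n + 1) = n * n + n := by ring
    omega
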